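/- Suppose A = A_1 ⊞_s A_2 with blocks of sizes g and h, A y ᵀ = 1ᵀ, A_1 zᵀ = 1ᵀ, A_2 z'ᵀ = 1ᵀ, and 1 - s²(Σz_i)(Σz'_i) ≠ 0. Then Σ_{i=1}^g y_i = (Σ z_i - s Σ z_i Σ z'_i)/(1 - s² Σ z_i Σ z'_i), Σ_{i=g+1}^j y_i = (Σ z'_i - s Σ z_i Σ z'_i)/(1 - s² Σ z_i Σ z'_i), and hence Σ_{i=1}^j y_i = (Σ z_i + Σ z'_i - 2s Σ z_i Σ z'_i)/(1 - s² Σ z_i Σ z'_i). -/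

import Mathlib

/-- Membership in the class `M_j` of ultrametric matrices from the paper. -/
def MemUltra (η : ℝ) {ι : Type*} [Fintype ι] [DecidableEq ι] (A : Matrix ι ι ℝ) : Prop :=
  A.IsSymm ∧ (∀ i, A i i = 1) ∧
  (∀ i l, i ≠ l → 0 ≤ A i l ∧ A i l ≤ 1 - η) ∧
  (∀ i l p, i ≠ l → l ≠ p → i ≠ p → min (A l p) (A i p) ≤ A i l)

/-- The block sum `A₁ ⊞_s A₂`. -/
def blockSum {g h : ℕ} (A₁ : Matrix (Fin g) (Fin g) ℝ) (A₂ : Matrix (Fin h) (Fin h) ℝ)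
    (s : ℝ) : Matrix (Fin g ⊕ Fin h) (Fin g ⊕ Fin h) ℝ :=
  Matrix.fromBlocks A₁ (Matrix.of fun _ _ => s) (Matrix.of fun _ _ => s) A₂

/-- formulas (kk1), (kk1+) of the paper for the partial sums of the solution
`y` of `(A₁ ⊞_s A₂) yᵀ = 1ᵀ` in terms of the solutions `z`, `z'` of the block systems. -/
theorem blockSum_solution_sums {η : ℝ} (hη : 0 < η) {g h : ℕ}
    (A₁ : Matrix (Fin g) (Fin g) ℝ) (A₂ : Matrix (Fin h) (Fin h) ℝ)
    (hA₁ : MemUltra η A₁) (hA₂ : MemUltra η A₂) (s : ℝ)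
    (y : Fin g ⊕ Fin h → ℝ) (z : Fin g → ℝ) (z' : Fin h → ℝ)
    (hy : (blockSum A₁ A₂ s).mulVec y = fun _ => 1)
    (hz : A₁.mulVec z = fun _ => 1)
    (hz' : A₂.mulVec z' = fun _ => 1)
    (hden : 1 - s ^ 2 * (∑ i, z i) * (∑ i, z' i) ≠ 0) :
    (∑ i, y (Sum.inl i)) =
      ((∑ i, z i) - s * (∑ i, z i) * (∑ i, z' i)) /
        (1 - s ^ 2 * (∑ i, z i) * (∑ i, z' i)) ∧
    (∑ i, y (Sum.inr i)) =
      ((∑ i, z' i) - s * (∑ i, z i) * (∑ i, z' i)) /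
        (1 - s ^ 2 * (∑ i, z i) * (∑ i, z' i)) ∧
    (∑ p, y p) =
      ((∑ i, z i) + (∑ i, z' i) - 2 * s * (∑ i, z i) * (∑ i, z' i)) /
        (1 - s ^ 2 * (∑ i, z i) * (∑ i, z' i)) := by
  obtain ⟨hsymm1, -, -, -⟩ := hA₁
  obtain ⟨hsymm2, -, -, -⟩ := hA₂
  have hz1 : ∀ i, ∑ l, A₁ i l * z l = 1 := by
    intro i
    have := congrFun hz i
    simpa [Matrix.mulVec, dotProduct] using this
  have hz'1 : ∀ i, ∑ l, A₂ i l * z' l = 1 := by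
    intro i
    have := congrFun hz' i
    simpa [Matrix.mulVec, dotProduct] using this
  have row1 : ∀ l, (∑ i, A₁ l i * y (Sum.inl i)) + s * ∑ i, y (Sum.inr i) = 1 := by
    intro l
    have := congrFun hy (Sum.inl l)
    simpa [blockSum, Matrix.mulVec, dotProduct, Fintype.sum_sum_type,
      Finset.mul_sum] using this
  have row2 : ∀ l, (s * ∑ i, y (Sum.inl i)) + ∑ i, A₂ l i * y (Sum.inr i) = 1 := by
    intro l
    have := congrFun hy (Sum.inr l)
    simpa [blockSum, Matrix.mulVec, dotProduct, Fintype.sum_sum_type,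
      Finset.mul_sum] using this
  set Z := ∑ i, z i with hZ
  set Z' := ∑ i, z' i with hZ'
  set Y₁ := ∑ i, y (Sum.inl i) with hY₁
  set Y₂ := ∑ i, y (Sum.inr i) with hY₂
  have key1 : ∑ l, z l * (∑ i, A₁ l i * y (Sum.inl i)) = Y₁ := by
    have : ∑ l, z l * (∑ i, A₁ l i * y (Sum.inl i))
        = ∑ i, (∑ l, A₁ i l * z l) * y (Sum.inl i) := by
      simp_rw [Finset.mul_sum, Finset.sum_mul]
      rw [Finset.sum_comm]
      refine Finset.sum_congr rfl fun i _ => Finset.sum_congr rfl fun l _ => ?_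
      rw [hsymm1.apply i l]; ring
    rw [this]
    simp [hz1, hY₁]
  have key2 : ∑ l, z' l * (∑ i, A₂ l i * y (Sum.inr i)) = Y₂ := by
    have : ∑ l, z' l * (∑ i, A₂ l i * y (Sum.inr i))
        = ∑ i, (∑ l, A₂ i l * z' l) * y (Sum.inr i) := by
      simp_rw [Finset.mul_sum, Finset.sum_mul]
      rw [Finset.sum_comm]
      refine Finset.sum_congr rfl fun i _ => Finset.sum_congr rfl fun l _ => ?_
      rw [hsymm2.apply i l]; ring
    rw [this]
    simp [hz'1, hY₂]
  have eq1 : Y₁ + s * Z * Y₂ = Z := by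
    have h1 : ∑ l, z l * ((∑ i, A₁ l i * y (Sum.inl i)) + s * Y₂) = ∑ l, z l * 1 :=
      Finset.sum_congr rfl fun l _ => by rw [row1 l]
    simp_rw [mul_add, Finset.sum_add_distrib, mul_one] at h1
    rw [key1, ← Finset.sum_mul] at h1
    rw [← hZ] at h1
    linarith [h1]
  have eq2 : Y₂ + s * Z' * Y₁ = Z' := by
    have h1 : ∑ l, z' l * ((s * Y₁) + ∑ i, A₂ l i * y (Sum.inr i)) = ∑ l, z' l * 1 :=
      Finset.sum_congr rfl fun l _ => by rw [row2 l]
    simp_rw [mul_add, Finset.sum_add_distrib, mul_one] at h1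
    rw [key2, ← Finset.sum_mul] at h1
    rw [← hZ'] at h1
    linarith [h1]
  refine ⟨?_, ?_, ?_⟩
  · rw [eq_div_iff hden]
    linear_combination eq1 - s * Z * eq2
  · rw [eq_div_iff hden]
    linear_combination eq2 - s * Z' * eq1
  · rw [Fintype.sum_sum_type, ← hY₁, ← hY₂]
    rw [eq_div_iff hden]
    linear_combination (1 - s * Z') * eq1 + (1 - s * Z) * eq2
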